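/- Let μ₀ = μ₁ + μ₂ with μ₀ ≥ μ₁ having compact infinite supports, and β_n := γ_n(μ₁)/γ_n(μ₀) − 1. Then ‖p_n(μ₀,·)‖_{L²(μ₂)} ≤ ‖p_n(μ₁,·)‖_{L²(μ₂)} for all n. -/

import Mathlib

open MeasureTheory Polynomial Filter

noncomputable section

/-- The (closed) support of a Borel measure on `ℂ`. -/
def msupp (μ : Measure ℂ) : Set ℂ := {z | ∀ U ∈ nhds z, μ U ≠ 0}

/-- `p` is the sequence of orthonormal polynomials for `μ`:
`p n` has degree `n`, positive (real) leading coefficient, and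
`⟪p m, p n⟫_μ = δ_{m n}`. -/
def ONP (μ : Measure ℂ) (p : ℕ → Polynomial ℂ) : Prop :=
  (∀ n, (p n).natDegree = n) ∧
  (∀ n, 0 < ((p n).leadingCoeff).re ∧ ((p n).leadingCoeff).im = 0) ∧
  (∀ m n, ∫ z, (p m).eval z * (starRingEnd ℂ) ((p n).eval z) ∂μ
      = if m = n then 1 else 0)

/-- The `n`-th Christoffel function of the measure `μ` at the point `z`. -/
def christoffel (μ : Measure ℂ) (n : ℕ) (z : ℂ) : ℝ :=
  sInf {r : ℝ | ∃ P : Polynomial ℂ, P.natDegree ≤ n ∧ P.eval z = 1 ∧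
      r = ∫ t, ‖P.eval t‖ ^ 2 ∂μ}

/- ### Auxiliary lemmas -/

lemma measure_compl_msupp (μ : Measure ℂ) : μ (msupp μ)ᶜ = 0 := by
  apply measure_null_of_locally_null
  intro x hx
  simp only [Set.mem_compl_iff, msupp, Set.mem_setOf_eq, not_forall] at hx
  obtain ⟨U, hU, h0⟩ := hx
  push_neg at h0
  exact ⟨U, nhdsWithin_le_nhds hU, h0⟩

lemma cont_integrable {E : Type*} [NormedAddCommGroup E] {μ : Measure ℂ} [IsFiniteMeasure μ]
    (hc : IsCompact (msupp μ)) {f : ℂ → E} (hf : Continuous f) : Integrable f μ := by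
  have hres : μ.restrict (msupp μ) = μ := by
    apply Measure.restrict_eq_self_of_ae_mem
    rw [ae_iff]
    exact measure_compl_msupp μ
  have h : IntegrableOn f (msupp μ) μ := hf.continuousOn.integrableOn_compact hc
  rwa [IntegrableOn, hres] at h

/-- The `L²(μ)` pairing of two polynomials. -/
def J (μ : Measure ℂ) (f g : Polynomial ℂ) : ℂ :=
  ∫ z, f.eval z * (starRingEnd ℂ) (g.eval z) ∂μ

section Jlemmas

variable {μ : Measure ℂ}

def HI (μ : Measure ℂ) : Prop := ∀ f g : Polynomial ℂ,
  Integrable (fun z => f.eval z * (starRingEnd ℂ) (g.eval z)) μ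

lemma J_add_left (hI : HI μ) (f g h : Polynomial ℂ) : J μ (f + g) h = J μ f h + J μ g h := by
  simp only [J, eval_add, add_mul]
  exact integral_add (hI f h) (hI g h)

lemma J_sub_left (hI : HI μ) (f g h : Polynomial ℂ) : J μ (f - g) h = J μ f h - J μ g h := by
  simp only [J, eval_sub, sub_mul]
  exact integral_sub (hI f h) (hI g h)

lemma J_C_mul_left (hI : HI μ) (a : ℂ) (f h : Polynomial ℂ) : J μ (C a * f) h = a * J μ f h := by
  simp only [J, eval_mul, eval_C, mul_assoc]
  exact integral_const_mul a _


lemma J_sub_right (hI : HI μ) (f g h : Polynomial ℂ) : J μ f (g - h) = J μ f g - J μ f h := by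
  simp only [J, eval_sub, map_sub, mul_sub]
  exact integral_sub (hI f g) (hI f h)

lemma J_C_mul_right (hI : HI μ) (a : ℂ) (f h : Polynomial ℂ) :
    J μ f (C a * h) = (starRingEnd ℂ) a * J μ f h := by
  simp only [J, eval_mul, eval_C, map_mul]
  rw [← integral_const_mul]
  congr 1
  funext z
  ring

lemma J_conj (f g : Polynomial ℂ) : (starRingEnd ℂ) (J μ f g) = J μ g f := by
  rw [J, ← integral_conj]
  congr 1
  funext z
  simp [mul_comm]

lemma J_self (f : Polynomial ℂ) :
    J μ f f = ((∫ z, ‖f.eval z‖ ^ 2 ∂μ : ℝ) : ℂ) := by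
  calc J μ f f = ∫ z, ((‖f.eval z‖ ^ 2 : ℝ) : ℂ) ∂μ := by
        rw [J]; congr 1; funext z; rw [Complex.sq_norm, Complex.mul_conj]
    _ = _ := integral_ofReal

lemma J_orth (hI : HI μ) {p : ℕ → Polynomial ℂ} (hp : ONP μ p) :
    ∀ q : Polynomial ℂ, ∀ n : ℕ, q.degree < n → J μ q (p n) = 0 := by
  suffices H : ∀ m : ℕ, ∀ q : Polynomial ℂ, q.natDegree = m →
      ∀ n : ℕ, q.degree < n → J μ q (p n) = 0 by
    exact fun q n h => H q.natDegree q rfl n h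
  intro m
  induction m using Nat.strong_induction_on with
  | _ m ih =>
    intro q hq n hn
    rcases eq_or_ne q 0 with rfl | hq0
    · simp [J]
    · set k := q.natDegree with hk
      have hdq : q.degree = (k : ℕ) := degree_eq_natDegree hq0
      have hkn : k < n := by
        rw [hdq] at hn; exact_mod_cast hn
      have hpk0 : p k ≠ 0 := by
        intro h
        have := (hp.2.1 k).1
        rw [h] at this; simp at this
      have hlc1 : (p k).leadingCoeff ≠ 0 := leadingCoeff_ne_zero.mpr hpk0
      set a := q.leadingCoeff / (p k).leadingCoeff with ha
      have ha0 : a ≠ 0 := div_ne_zero (leadingCoeff_ne_zero.mpr hq0) hlc1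
      have hdeg : q.degree = (C a * p k).degree := by
        rw [degree_C_mul ha0, hdq, degree_eq_natDegree hpk0, hp.1 k]
      have hlceq : q.leadingCoeff = (C a * p k).leadingCoeff := by
        rw [leadingCoeff_mul, leadingCoeff_C, ha, div_mul_cancel₀ _ hlc1]
      have hsub : (q - C a * p k).degree < q.degree := degree_sub_lt hdeg hq0 hlceq
      have hqeq : q = C a * p k + (q - C a * p k) := by ring
      have hJ2 : J μ (q - C a * p k) (p n) = 0 := by
        rcases eq_or_ne (q - C a * p k) 0 with h0 | h0
        · rw [h0]; simp [J]
        · have hlt : (q - C a * p k).natDegree < k := natDegree_lt_natDegree h0 hsub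
          exact ih _ (hk ▸ hq ▸ hlt) _ rfl n (lt_trans (hdq ▸ hsub) hn)
      have hJ1 : J μ (p k) (p n) = 0 := by
        rw [J, hp.2.2 k n, if_neg hkn.ne]
      calc J μ q (p n) = J μ (C a * p k + (q - C a * p k)) (p n) := by rw [← hqeq]
        _ = a * J μ (p k) (p n) + J μ (q - C a * p k) (p n) := by
            rw [J_add_left hI, J_C_mul_left hI]
        _ = 0 := by rw [hJ1, hJ2]; ring

end Jlemmas

/-- `‖p_n(μ₀,·)‖_{L²(μ₂)} ≤ ‖p_n(μ₁,·)‖_{L²(μ₂)}`. -/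
theorem stmt_7 (μ0 μ1 μ2 : Measure ℂ) [IsFiniteMeasure μ1] [IsFiniteMeasure μ2]
    (hsum : μ0 = μ1 + μ2) (hle : μ1 ≤ μ0)
    (h0c : IsCompact (msupp μ0)) (h0i : (msupp μ0).Infinite)
    (h1c : IsCompact (msupp μ1)) (h1i : (msupp μ1).Infinite)
    (p0 p1 : ℕ → Polynomial ℂ) (hp0 : ONP μ0 p0) (hp1 : ONP μ1 p1) :
    ∀ n : ℕ,
      Real.sqrt (∫ z, ‖(p0 n).eval z‖ ^ 2 ∂μ2)
        ≤ Real.sqrt (∫ z, ‖(p1 n).eval z‖ ^ 2 ∂μ2) := by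
  intro n
  haveI hfin0 : IsFiniteMeasure μ0 := by rw [hsum]; infer_instance
  have hle2 : μ2 ≤ μ0 := by rw [hsum]; exact Measure.le_add_left le_rfl
  -- integrability of all pairings
  have hI0 : HI μ0 := by
    intro f g
    exact cont_integrable h0c
      ((f.continuous).mul (Complex.continuous_conj.comp g.continuous))
  have hI1 : HI μ1 := fun f g => (hI0 f g).mono_measure hle
  have hI2 : HI μ2 := fun f g => (hI0 f g).mono_measure hle2
  have hIsq : ∀ (f : Polynomial ℂ),
      Integrable (fun z => ‖f.eval z‖ ^ 2) μ0 := by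
    intro f
    exact cont_integrable h0c ((continuous_norm.comp f.continuous).pow 2)
  -- abbreviations
  set A0 : ℝ := ∫ z, ‖(p0 n).eval z‖ ^ 2 ∂μ0 with hA0def
  set A1 : ℝ := ∫ z, ‖(p0 n).eval z‖ ^ 2 ∂μ1 with hA1def
  set A2 : ℝ := ∫ z, ‖(p0 n).eval z‖ ^ 2 ∂μ2 with hA2def
  set B0 : ℝ := ∫ z, ‖(p1 n).eval z‖ ^ 2 ∂μ0 with hB0def
  set B1 : ℝ := ∫ z, ‖(p1 n).eval z‖ ^ 2 ∂μ1 with hB1def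
  set B2 : ℝ := ∫ z, ‖(p1 n).eval z‖ ^ 2 ∂μ2 with hB2def
  -- normalization
  have hA0 : A0 = 1 := by
    have h := (J_self (μ := μ0) (p0 n)).symm.trans (by rw [J, hp0.2.2 n n, if_pos rfl])
    exact_mod_cast h
  have hB1 : B1 = 1 := by
    have h := (J_self (μ := μ1) (p1 n)).symm.trans (by rw [J, hp1.2.2 n n, if_pos rfl])
    exact_mod_cast h
  -- leading coefficients
  have hlc0 : (p0 n).leadingCoeff ≠ 0 := by
    intro h; have := (hp0.2.1 n).1; rw [h] at this; simp at this
  have hlc1 : (p1 n).leadingCoeff ≠ 0 := by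
    intro h; have := (hp1.2.1 n).1; rw [h] at this; simp at this
  have hne0 : p0 n ≠ 0 := leadingCoeff_ne_zero.mp hlc0
  have hne1 : p1 n ≠ 0 := leadingCoeff_ne_zero.mp hlc1
  have hd0 : (p0 n).degree = (n : ℕ) := by
    rw [degree_eq_natDegree hne0, hp0.1 n]
  have hd1 : (p1 n).degree = (n : ℕ) := by
    rw [degree_eq_natDegree hne1, hp1.1 n]
  set c : ℂ := (p0 n).leadingCoeff / (p1 n).leadingCoeff with hcdef
  have hc0 : c ≠ 0 := div_ne_zero hlc0 hlc1
  -- the two remainder polynomials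
  set q : Polynomial ℂ := p0 n - C c * p1 n with hqdef
  set r : Polynomial ℂ := p1 n - C c⁻¹ * p0 n with hrdef
  have hqdeg : q.degree < (n : ℕ) := by
    have : q.degree < (p0 n).degree := by
      apply degree_sub_lt _ hne0
      · rw [leadingCoeff_mul, leadingCoeff_C, hcdef, div_mul_cancel₀ _ hlc1]
      · rw [degree_C_mul hc0, hd0, hd1]
    rwa [hd0] at this
  have hrdeg : r.degree < (n : ℕ) := by
    have : r.degree < (p1 n).degree := by
      apply degree_sub_lt _ hne1
      · rw [leadingCoeff_mul, leadingCoeff_C, hcdef]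
        field_simp
      · rw [degree_C_mul (inv_ne_zero hc0), hd0, hd1]
    rwa [hd1] at this
  have hq0 : p0 n = C c * p1 n + q := by rw [hqdef]; ring
  have hr0 : p1 n = C c⁻¹ * p0 n + r := by rw [hrdef]; ring
  -- μ1 estimates
  have hqorth1 : J μ1 q (p1 n) = 0 := J_orth hI1 hp1 q n hqdeg
  have hE1 : J μ1 (p0 n) (p1 n) = c := by
    calc J μ1 (p0 n) (p1 n) = J μ1 (C c * p1 n + q) (p1 n) := by rw [← hq0]
      _ = c * J μ1 (p1 n) (p1 n) + J μ1 q (p1 n) := by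
          rw [J_add_left hI1, J_C_mul_left hI1]
      _ = c := by rw [hqorth1, J, hp1.2.2 n n, if_pos rfl]; ring
  have hE1' : J μ1 (p1 n) (p0 n) = (starRingEnd ℂ) c := by
    rw [← J_conj, hE1]
  have hS1 : J μ1 q q = (A1 : ℂ) - c * (starRingEnd ℂ) c := by
    have h1 : J μ1 q (p0 n) = (A1 : ℂ) - c * (starRingEnd ℂ) c := by
      rw [hqdef, J_sub_left hI1, J_C_mul_left hI1, hE1', J_self, hA1def]
    calc J μ1 q q = J μ1 q (p0 n) - (starRingEnd ℂ) c * J μ1 q (p1 n) := by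
          rw [hqdef, J_sub_right hI1, J_C_mul_right hI1, ← hqdef]
      _ = (A1 : ℂ) - c * (starRingEnd ℂ) c := by rw [h1, hqorth1]; ring
  -- μ0 estimates
  have hrorth0 : J μ0 r (p0 n) = 0 := J_orth hI0 hp0 r n hrdeg
  have hF0 : J μ0 (p1 n) (p0 n) = c⁻¹ := by
    calc J μ0 (p1 n) (p0 n) = J μ0 (C c⁻¹ * p0 n + r) (p0 n) := by rw [← hr0]
      _ = c⁻¹ * J μ0 (p0 n) (p0 n) + J μ0 r (p0 n) := by
          rw [J_add_left hI0, J_C_mul_left hI0]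
      _ = c⁻¹ := by rw [hrorth0, J, hp0.2.2 n n, if_pos rfl]; ring
  have hF0' : J μ0 (p0 n) (p1 n) = (starRingEnd ℂ) c⁻¹ := by
    rw [← J_conj, hF0]
  have hS0 : J μ0 r r = (B0 : ℂ) - c⁻¹ * (starRingEnd ℂ) c⁻¹ := by
    have h1 : J μ0 r (p1 n) = (B0 : ℂ) - c⁻¹ * (starRingEnd ℂ) c⁻¹ := by
      rw [hrdef, J_sub_left hI0, J_C_mul_left hI0, hF0', J_self, hB0def]
    calc J μ0 r r = J μ0 r (p1 n) - (starRingEnd ℂ) c⁻¹ * J μ0 r (p0 n) := by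
          rw [hrdef, J_sub_right hI0, J_C_mul_right hI0, ← hrdef]
      _ = (B0 : ℂ) - c⁻¹ * (starRingEnd ℂ) c⁻¹ := by rw [h1, hrorth0]; ring
  -- pass to real inequalities
  set t : ℝ := Complex.normSq c with htdef
  have ht0 : 0 < t := Complex.normSq_pos.mpr hc0
  have hA1ge : t ≤ A1 := by
    have hre : ((∫ z, ‖q.eval z‖ ^ 2 ∂μ1 : ℝ) : ℂ) = (A1 : ℂ) - (t : ℝ) := by
      rw [← J_self, hS1, Complex.mul_conj]
    have hre' : (∫ z, ‖q.eval z‖ ^ 2 ∂μ1 : ℝ) = A1 - t := by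
      exact_mod_cast hre
    have hnn : 0 ≤ (∫ z, ‖q.eval z‖ ^ 2 ∂μ1 : ℝ) :=
      integral_nonneg fun z => sq_nonneg _
    linarith
  have hB0ge : t⁻¹ ≤ B0 := by
    have hre : ((∫ z, ‖r.eval z‖ ^ 2 ∂μ0 : ℝ) : ℂ)
        = (B0 : ℂ) - ((t⁻¹ : ℝ) : ℂ) := by
      rw [← J_self, hS0, Complex.mul_conj, htdef, Complex.normSq_inv, Complex.ofReal_inv]
    have hre' : (∫ z, ‖r.eval z‖ ^ 2 ∂μ0 : ℝ) = B0 - t⁻¹ := by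
      exact_mod_cast hre
    have hnn : 0 ≤ (∫ z, ‖r.eval z‖ ^ 2 ∂μ0 : ℝ) :=
      integral_nonneg fun z => sq_nonneg _
    linarith
  -- splitting of the integrals
  have hsplitA : A0 = A1 + A2 := by
    rw [hA0def, hA1def, hA2def, hsum]
    exact integral_add_measure ((hIsq (p0 n)).mono_measure hle)
      ((hIsq (p0 n)).mono_measure hle2)
  have hsplitB : B0 = B1 + B2 := by
    rw [hB0def, hB1def, hB2def, hsum]
    exact integral_add_measure ((hIsq (p1 n)).mono_measure hle)
      ((hIsq (p1 n)).mono_measure hle2)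
  have hA1le : A1 ≤ 1 := by
    rw [← hA0]
    exact integral_mono_measure hle (Eventually.of_forall fun z => sq_nonneg _) (hIsq (p0 n))
  have ht1 : t ≤ 1 := le_trans hA1ge hA1le
  -- conclude
  apply Real.sqrt_le_sqrt
  have hA2 : A2 ≤ 1 - t := by linarith [hA1ge, hsplitA, hA0]
  have hB2 : t⁻¹ - 1 ≤ B2 := by linarith [hB0ge, hsplitB, hB1]
  have key : 1 - t ≤ t⁻¹ - 1 := by
    have h : t * (t⁻¹ - 1 - (1 - t)) = (1 - t) ^ 2 := by
      field_simp
    nlinarith [sq_nonneg (1 - t), ht0]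
  linarith
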